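/- Let f be a formal power series over ℂ with constant coefficient 0 and coefficient of X equal to 1. If there exists an integer m ≥ 1 such that the m-fold composite f^{∘m} equals X, then f = X. -/

import Mathlib

open PowerSeries

/-- Substitution of the power series `g` into the power series `f`, i.e. `f ∘ g = f(g(X))`.
For `g` with zero constant coefficient, the coefficient of `X^k` in `f(g(X))` is
`∑_{n ≤ k} (coeff n f) * (coeff k (g^n))`, since `coeff k (g^n) = 0` for `n > k`. -/
noncomputable def PowerSeries.compose (f g : PowerSeries ℂ) : PowerSeries ℂ :=
  PowerSeries.mk fun k =>
    ∑ n ∈ Finset.range (k + 1), PowerSeries.coeff n f * PowerSeries.coeff k (g ^ n)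

/-- The `m`-fold composite `f^{∘m}`: `f^{∘0} = X` and `f^{∘(m+1)} = f ∘ f^{∘m}`. -/
noncomputable def PowerSeries.iterComp (f : PowerSeries ℂ) : ℕ → PowerSeries ℂ
  | 0 => PowerSeries.X
  | m + 1 => PowerSeries.compose f (PowerSeries.iterComp f m)

/-- `g = X + (coeff k g) X^k + O(X^{k+1})`. -/
def Good (k : ℕ) (g : PowerSeries ℂ) : Prop :=
  PowerSeries.coeff 0 g = 0 ∧ PowerSeries.coeff 1 g = 1 ∧
    ∀ j, 2 ≤ j → j < k → PowerSeries.coeff j g = 0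

lemma pow_coeff_lt {k : ℕ} {g : PowerSeries ℂ} (hg : Good k g) :
    ∀ n i, i < k → PowerSeries.coeff i (g ^ n) = if i = n then 1 else 0 := by
  obtain ⟨h0, h1, hmid⟩ := hg
  intro n
  induction n with
  | zero =>
    intro i hi
    simp [PowerSeries.coeff_one]
  | succ n ih =>
    intro i hi
    rw [pow_succ', PowerSeries.coeff_mul]
    rcases Nat.eq_zero_or_pos i with rfl | hipos
    · simp [h0]
    · rw [Finset.sum_eq_single (1, i - 1)]
      · rw [h1, one_mul, ih (i - 1) (lt_of_le_of_lt (Nat.pred_le i) hi)]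
        have e : (i - 1 = n) ↔ (i = n + 1) := by omega
        simp only [e]
      · rintro ⟨p, q⟩ hmem hne
        rw [Finset.HasAntidiagonal.mem_antidiagonal] at hmem
        simp only at hmem
        have hp1 : p ≠ 1 := by
          rintro rfl
          apply hne
          have : q = i - 1 := by omega
          rw [this]
        rcases Nat.eq_zero_or_pos p with rfl | hp
        · rw [h0]; ring
        · rw [hmid p (by omega) (by omega)]; ring
      · intro hnot
        exact absurd (Finset.HasAntidiagonal.mem_antidiagonal.mpr (by simp; omega)) hnot

lemma pow_coeff_k {k : ℕ} (hk : 2 ≤ k) {g : PowerSeries ℂ} (hg : Good k g) :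
    ∀ n, PowerSeries.coeff k (g ^ n) =
      (if n = k then 1 else 0) + (if n = 1 then PowerSeries.coeff k g else 0) := by
  obtain ⟨h0, h1, hmid⟩ := hg
  intro n
  match n with
  | 0 =>
    rw [pow_zero, PowerSeries.coeff_one]
    rw [if_neg (by omega : ¬ k = 0), if_neg (by omega : ¬ (0:ℕ) = k),
      if_neg (by omega : ¬ (0:ℕ) = 1)]
    ring
  | n + 1 =>
    rw [pow_succ', PowerSeries.coeff_mul]
    have key : ∀ p ∈ Finset.HasAntidiagonal.antidiagonal k,
        PowerSeries.coeff p.1 g * PowerSeries.coeff p.2 (g ^ n) =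
          (if p = (1, k - 1) then (if k - 1 = n then (1 : ℂ) else 0) else 0) +
          (if p = ((k : ℕ), 0) then (if n = 0 then PowerSeries.coeff k g else 0) else 0) := by
      rintro ⟨p, q⟩ hmem
      rw [Finset.HasAntidiagonal.mem_antidiagonal] at hmem
      simp only at hmem
      by_cases hp1 : p = 1
      · subst hp1
        have hq : q = k - 1 := by omega
        subst hq
        have hne : ((1:ℕ), k - 1) ≠ ((k:ℕ), 0) := by
          rw [Ne, Prod.mk.injEq]; omega
        rw [h1, one_mul, pow_coeff_lt ⟨h0, h1, hmid⟩ n (k - 1) (by omega)]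
        rw [if_pos rfl, if_neg hne, add_zero]
      · by_cases hpk : p = k
        · subst hpk
          have hq : q = 0 := by omega
          subst hq
          have hne : ((p:ℕ), 0) ≠ ((1:ℕ), p - 1) := by
            rw [Ne, Prod.mk.injEq]; omega
          rw [pow_coeff_lt ⟨h0, h1, hmid⟩ n 0 (by omega)]
          rw [if_neg hne, if_pos rfl, zero_add]
          by_cases hn : n = 0
          · subst hn; simp
          · rw [if_neg (by omega : ¬ (0:ℕ) = n), if_neg hn]; simp
        · have hpg : PowerSeries.coeff p g = 0 := by
            rcases Nat.eq_zero_or_pos p with rfl | hp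
            · exact h0
            · exact hmid p (by omega) (by omega)
          have hne1 : ((p:ℕ), q) ≠ ((1:ℕ), k - 1) := by
            rw [Ne, Prod.mk.injEq]; tauto
          have hne2 : ((p:ℕ), q) ≠ ((k:ℕ), 0) := by
            rw [Ne, Prod.mk.injEq]; tauto
          rw [hpg, zero_mul, if_neg hne1, if_neg hne2]
          ring
    rw [Finset.sum_congr rfl key, Finset.sum_add_distrib,
      Finset.sum_ite_eq' (Finset.HasAntidiagonal.antidiagonal k) ((1 : ℕ), k - 1),
      Finset.sum_ite_eq' (Finset.HasAntidiagonal.antidiagonal k) ((k : ℕ), 0)]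
    rw [if_pos (Finset.HasAntidiagonal.mem_antidiagonal.mpr (by simp; omega)),
      if_pos (Finset.HasAntidiagonal.mem_antidiagonal.mpr (by simp))]
    congr 1
    · split_ifs with h h' <;> first | rfl | omega
    · split_ifs with h h' <;> first | rfl | omega

lemma compose_good {k : ℕ} (hk : 2 ≤ k) {f g : PowerSeries ℂ}
    (hf : Good k f) (hg : Good k g) :
    Good k (PowerSeries.compose f g) ∧
      PowerSeries.coeff k (PowerSeries.compose f g) =
        PowerSeries.coeff k f + PowerSeries.coeff k g := by
  obtain ⟨hf0, hf1, hfmid⟩ := hf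
  have hcoeff : ∀ i, PowerSeries.coeff i (PowerSeries.compose f g) =
      ∑ n ∈ Finset.range (i + 1),
        PowerSeries.coeff n f * PowerSeries.coeff i (g ^ n) := by
    intro i; simp [PowerSeries.compose, PowerSeries.coeff_mk]
  refine ⟨⟨?_, ?_, ?_⟩, ?_⟩
  · rw [hcoeff]
    simp [pow_coeff_lt hg 0 0 (by omega), hf0]
  · rw [hcoeff]
    have key : ∀ n ∈ Finset.range 2,
        PowerSeries.coeff n f * PowerSeries.coeff 1 (g ^ n)
          = if n = 1 then (1 : ℂ) else 0 := by
      intro n hn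
      rw [pow_coeff_lt hg n 1 (by omega)]
      simp only [Finset.mem_range] at hn
      interval_cases n <;> simp [hf0, hf1]
    rw [Finset.sum_congr rfl key]
    simp
  · intro j hj2 hjk
    rw [hcoeff]
    have key : ∀ n ∈ Finset.range (j + 1),
        PowerSeries.coeff n f * PowerSeries.coeff j (g ^ n)
          = if n = j then PowerSeries.coeff j f else 0 := by
      intro n hn
      rw [pow_coeff_lt hg n j hjk]
      rcases eq_or_ne n j with rfl | hne
      · simp
      · simp [hne, Ne.symm hne]
    rw [Finset.sum_congr rfl key, Finset.sum_ite_eq' (Finset.range (j + 1)) j]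
    simp [hfmid j hj2 hjk]
  · rw [hcoeff]
    have key : ∀ n ∈ Finset.range (k + 1),
        PowerSeries.coeff n f * PowerSeries.coeff k (g ^ n)
          = (if n = k then PowerSeries.coeff k f else 0) +
            (if n = 1 then PowerSeries.coeff k g else 0) := by
      intro n hn
      rw [pow_coeff_k hk hg n, mul_add]
      congr 1
      · rcases eq_or_ne n k with rfl | hne
        · simp
        · simp [hne]
      · rcases eq_or_ne n 1 with rfl | hne
        · simp [hf1]
        · simp [hne]
    rw [Finset.sum_congr rfl key, Finset.sum_add_distrib,
      Finset.sum_ite_eq' (Finset.range (k + 1)) k,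
      Finset.sum_ite_eq' (Finset.range (k + 1)) 1]
    rw [if_pos (Finset.mem_range.mpr (by omega)),
      if_pos (Finset.mem_range.mpr (by omega))]

lemma iterComp_good {k : ℕ} (hk : 2 ≤ k) {f : PowerSeries ℂ} (hf : Good k f) :
    ∀ n, Good k (PowerSeries.iterComp f n) ∧
      PowerSeries.coeff k (PowerSeries.iterComp f n) = n * PowerSeries.coeff k f := by
  intro n
  induction n with
  | zero =>
    refine ⟨⟨?_, ?_, fun j hj2 hjk => ?_⟩, ?_⟩ <;>
      simp [PowerSeries.iterComp, PowerSeries.coeff_X]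
    · omega
    · omega
  | succ n ih =>
    obtain ⟨hgood, hck⟩ := ih
    obtain ⟨hg, hc⟩ := compose_good hk hf hgood
    refine ⟨hg, ?_⟩
    show PowerSeries.coeff k (PowerSeries.compose f (PowerSeries.iterComp f n)) = _
    rw [hc, hck]
    push_cast
    ring

/-- If `f ∈ ℂ⟦X⟧` has constant coefficient `0` and coefficient of `X` equal to `1`, and some
`m`-fold composite `f^{∘m}` with `m ≥ 1` equals `X`, then `f = X`. -/
theorem powerSeries_eq_X_of_iterComp_eq_X (f : PowerSeries ℂ)
    (h0 : PowerSeries.coeff 0 f = 0) (h1 : PowerSeries.coeff 1 f = 1)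
    (h : ∃ m : ℕ, 1 ≤ m ∧ PowerSeries.iterComp f m = PowerSeries.X) :
    f = PowerSeries.X := by
  obtain ⟨m, hm, hX⟩ := h
  have key : ∀ k, 2 ≤ k → PowerSeries.coeff k f = 0 := by
    intro k
    induction k using Nat.strong_induction_on with
    | _ k ih =>
      intro hk2
      have hgoodf : Good k f := ⟨h0, h1, fun j hj2 hjk => ih j hjk hj2⟩
      have hmk := (iterComp_good hk2 hgoodf m).2
      rw [hX] at hmk
      rw [PowerSeries.coeff_X, if_neg (by omega : ¬ k = 1)] at hmk
      have hmne : (m : ℂ) ≠ 0 := Nat.cast_ne_zero.mpr (by omega)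
      exact (mul_eq_zero.mp hmk.symm).resolve_left hmne
  ext k
  rw [PowerSeries.coeff_X]
  rcases Nat.lt_or_ge k 2 with hk | hk
  · interval_cases k <;> simp [h0, h1]
  · rw [key k hk, if_neg (by omega : ¬ k = 1)]
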